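/- Let P = {(w,x) ∈ ℝ × [0,1]^n : w ≤ f_ℓ(x), ∀ℓ ∈ [n]} where f_ℓ(x) = u_{ℓ+1}/(u_{ℓ+1}+u₀) + ∑_{j=1}^{ℓ} ( u_j/(u_j+u₀) − u_{ℓ+1}/(u_{ℓ+1}+u₀) ) x_j, with u₀ > 0, u₁ ≥ ... ≥ uₙ ≥ u_{n+1} := 0. Then every extreme point (w*, x*) of P has x* ∈ {0,1}^n. -/

import Mathlib

open Finset



def coefP (a : ℕ → ℝ) (n : ℕ) (ℓ : ℕ) (j : Fin n) : ℝ :=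
  if (j : ℕ) + 1 ≤ ℓ then a ((j:ℕ)+1) - a (ℓ+1) else 0

def FfunP (a : ℕ → ℝ) (n : ℕ) (ℓ : ℕ) (y : Fin n → ℝ) : ℝ :=
  a (ℓ+1) + ∑ j, coefP a n ℓ j * y j

def SfunP (n : ℕ) (y : Fin n → ℝ) (m : ℕ) : ℝ :=
  ∑ j : Fin n, if (j : ℕ) + 1 ≤ m then y j else 0

lemma FfunP_succ (a : ℕ → ℝ) (n : ℕ) (ℓ : ℕ) (y : Fin n → ℝ) :
    FfunP a n (ℓ+1) y = FfunP a n ℓ y + (a (ℓ+1) - a (ℓ+2)) * (SfunP n y (ℓ+1) - 1) := by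
  have hterm : ∀ j : Fin n,
      coefP a n (ℓ+1) j * y j =
      coefP a n ℓ j * y j + (a (ℓ+1) - a (ℓ+2)) * (if (j:ℕ)+1 ≤ ℓ+1 then y j else 0) := by
    intro j
    unfold coefP
    by_cases h1 : (j:ℕ)+1 ≤ ℓ
    · have h2 : (j:ℕ)+1 ≤ ℓ+1 := by omega
      simp only [h1, h2, if_pos, if_true]
      rw [show ℓ+1+1 = ℓ+2 from rfl]
      ring
    · by_cases h2 : (j:ℕ)+1 ≤ ℓ+1
      · simp only [h1, h2, if_true, if_false]
        rw [show ℓ+1+1 = ℓ+2 from rfl]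
        have : (j:ℕ)+1 = ℓ+1 := by omega
        rw [this]
        ring
      · simp only [h1, h2, if_false]
        ring
  unfold FfunP SfunP
  rw [Finset.sum_congr rfl (fun j _ => hterm j), Finset.sum_add_distrib, ← Finset.mul_sum]
  rw [show ℓ+1+1 = ℓ+2 from rfl]
  ring

lemma FfunP_Ico (a : ℕ → ℝ) (n : ℕ) (y : Fin n → ℝ) (b c : ℕ) (h : b ≤ c) :
    FfunP a n c y = FfunP a n b y +
      ∑ r ∈ Ico b c, (a (r+1) - a (r+2)) * (SfunP n y (r+1) - 1) := by
  induction c, h using Nat.le_induction with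
  | base => simp
  | succ c hc ih =>
    rw [Finset.sum_Ico_succ_top hc, FfunP_succ, ih]
    ring

lemma SfunP_mono (n : ℕ) (y : Fin n → ℝ) (hy : ∀ j, 0 ≤ y j) {m m' : ℕ} (h : m ≤ m') :
    SfunP n y m ≤ SfunP n y m' := by
  apply Finset.sum_le_sum
  intro j _
  by_cases h1 : (j:ℕ)+1 ≤ m
  · have h2 : (j:ℕ)+1 ≤ m' := by omega
    simp [h1, h2]
  · by_cases h2 : (j:ℕ)+1 ≤ m'
    · simp [h1, h2, hy j]
    · simp [h1, h2]

lemma SfunP_single (n : ℕ) (j₀ : Fin n) (m : ℕ) :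
    SfunP n (fun j => if j = j₀ then (1:ℝ) else 0) m = if (j₀:ℕ)+1 ≤ m then 1 else 0 := by
  unfold SfunP
  have : ∀ j : Fin n, (if (j:ℕ)+1 ≤ m then (if j = j₀ then (1:ℝ) else 0) else 0)
      = if j = j₀ then (if (j₀:ℕ)+1 ≤ m then (1:ℝ) else 0) else 0 := by
    intro j
    by_cases hj : j = j₀
    · subst hj; simp
    · simp [hj]
  rw [Finset.sum_congr rfl (fun j _ => this j), Finset.sum_ite_eq' univ j₀]
  simp

lemma FfunP_add (a : ℕ → ℝ) (n ℓ : ℕ) (y d : Fin n → ℝ) (c : ℝ) :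
    FfunP a n ℓ (fun j => y j + c * d j)
      = FfunP a n ℓ y + c * ∑ j, coefP a n ℓ j * d j := by
  have h : ∀ j : Fin n, coefP a n ℓ j * (y j + c * d j)
      = coefP a n ℓ j * y j + c * (coefP a n ℓ j * d j) := fun j => by ring
  simp only [FfunP, Finset.mul_sum]
  rw [Finset.sum_congr rfl (fun j _ => h j), Finset.sum_add_distrib]
  ring

lemma mid_not_extreme {E : Type*} [AddCommGroup E] [Module ℝ E] {A : Set E} {p d : E}
    (hd : d ≠ 0) (h1 : p + d ∈ A) (h2 : p - d ∈ A) : p ∉ Set.extremePoints ℝ A := by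
  intro hp
  have hseg : p ∈ openSegment ℝ (p + d) (p - d) :=
    ⟨1/2, 1/2, by norm_num, by norm_num, by norm_num, by module⟩
  have := (hp.2 h1 h2 hseg)
  exact hd (by simpa using congrArg (fun q => q - p) this)

lemma not_extreme_of_direction (n : ℕ) (a : ℕ → ℝ) (p : ℝ × (Fin n → ℝ))
    (hbox : ∀ j, 0 ≤ p.2 j ∧ p.2 j ≤ 1)
    (hcons : ∀ ℓ ∈ Finset.Icc 1 n, p.1 ≤ FfunP a n ℓ p.2)
    (Dw : ℝ) (d : Fin n → ℝ)
    (hi : ∀ ℓ ∈ Finset.Icc 1 n, (∑ j, coefP a n ℓ j * d j) = Dw ∨ p.1 < FfunP a n ℓ p.2)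
    (hii : ∀ j, d j ≠ 0 → 0 < p.2 j ∧ p.2 j < 1)
    (hne : Dw ≠ 0 ∨ ∃ j, d j ≠ 0) :
    p ∉ Set.extremePoints ℝ {q : ℝ × (Fin n → ℝ) |
      (∀ j, 0 ≤ q.2 j ∧ q.2 j ≤ 1) ∧ ∀ ℓ ∈ Finset.Icc 1 n, q.1 ≤ FfunP a n ℓ q.2} := by
  classical
  set A : Set (ℝ × (Fin n → ℝ)) := {q : ℝ × (Fin n → ℝ) |
      (∀ j, 0 ≤ q.2 j ∧ q.2 j ≤ 1) ∧ ∀ ℓ ∈ Finset.Icc 1 n, q.1 ≤ FfunP a n ℓ q.2} with hA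
  set Δ : ℕ → ℝ := fun ℓ => ∑ j, coefP a n ℓ j * d j with hΔ
  set E₁ : Finset ℝ := (Finset.Icc 1 n).image
    (fun ℓ => if p.1 < FfunP a n ℓ p.2 then (FfunP a n ℓ p.2 - p.1) / (|Δ ℓ - Dw| + 1) else 1)
    with hE1
  set E₂ : Finset ℝ := Finset.univ.image
    (fun j : Fin n => if d j ≠ 0 then min (p.2 j) (1 - p.2 j) / (|d j| + 1) else 1) with hE2
  set E : Finset ℝ := insert (1:ℝ) (E₁ ∪ E₂) with hE
  have hEne : E.Nonempty := ⟨1, Finset.mem_insert_self _ _⟩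
  set ε : ℝ := E.min' hEne with hεdef
  have hεpos : 0 < ε := by
    rw [hεdef]
    rw [Finset.lt_min'_iff]
    intro b hb
    rw [hE, Finset.mem_insert, Finset.mem_union] at hb
    rcases hb with hb | hb | hb
    · rw [hb]; norm_num
    · rw [hE1, Finset.mem_image] at hb
      obtain ⟨ℓ, hℓ, rfl⟩ := hb
      by_cases hs : p.1 < FfunP a n ℓ p.2
      · rw [if_pos hs]
        apply div_pos (by linarith) (by positivity)
      · rw [if_neg hs]; norm_num
    · rw [hE2, Finset.mem_image] at hb
      obtain ⟨j, _, rfl⟩ := hb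
      by_cases hs : d j ≠ 0
      · rw [if_pos hs]
        obtain ⟨h0, h1⟩ := hii j hs
        apply div_pos (by simp [lt_min_iff]; constructor <;> linarith) (by positivity)
      · rw [if_neg hs]; norm_num
  have hε1 : ∀ ℓ ∈ Finset.Icc 1 n, p.1 < FfunP a n ℓ p.2 →
      ε * (|Δ ℓ - Dw| + 1) ≤ FfunP a n ℓ p.2 - p.1 := by
    intro ℓ hℓ hs
    have hmem : (FfunP a n ℓ p.2 - p.1) / (|Δ ℓ - Dw| + 1) ∈ E := by
      rw [hE]
      apply Finset.mem_insert_of_mem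
      apply Finset.mem_union_left
      rw [hE1, Finset.mem_image]
      exact ⟨ℓ, hℓ, by rw [if_pos hs]⟩
    have := Finset.min'_le E _ hmem
    rw [← hεdef] at this
    have hpos : (0:ℝ) < |Δ ℓ - Dw| + 1 := by positivity
    calc ε * (|Δ ℓ - Dw| + 1) ≤ ((FfunP a n ℓ p.2 - p.1) / (|Δ ℓ - Dw| + 1)) * (|Δ ℓ - Dw| + 1) := by
          apply mul_le_mul_of_nonneg_right this (le_of_lt hpos)
      _ = FfunP a n ℓ p.2 - p.1 := by field_simp
  have hε2 : ∀ j, d j ≠ 0 → ε * (|d j| + 1) ≤ min (p.2 j) (1 - p.2 j) := by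
    intro j hj
    have hmem : min (p.2 j) (1 - p.2 j) / (|d j| + 1) ∈ E := by
      rw [hE]
      apply Finset.mem_insert_of_mem
      apply Finset.mem_union_right
      rw [hE2, Finset.mem_image]
      exact ⟨j, Finset.mem_univ j, by rw [if_pos hj]⟩
    have := Finset.min'_le E _ hmem
    rw [← hεdef] at this
    have hpos : (0:ℝ) < |d j| + 1 := by positivity
    calc ε * (|d j| + 1) ≤ (min (p.2 j) (1 - p.2 j) / (|d j| + 1)) * (|d j| + 1) := by
          apply mul_le_mul_of_nonneg_right this (le_of_lt hpos)
      _ = min (p.2 j) (1 - p.2 j) := by field_simp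
  have hmemc : ∀ c : ℝ, |c| ≤ ε → (p.1 + c * Dw, fun j => p.2 j + c * d j) ∈ A := by
    intro c hc
    have hcabs : 0 ≤ |c| := abs_nonneg c
    constructor
    · intro j
      dsimp only
      by_cases hdj : d j = 0
      · simpa [hdj] using hbox j
      · obtain ⟨h0, h1⟩ := hii j hdj
        have hb := hε2 j hdj
        have habs : |c * d j| ≤ min (p.2 j) (1 - p.2 j) := by
          rw [abs_mul]
          have hdn : (0:ℝ) ≤ |d j| := abs_nonneg _
          nlinarith
        have h2 := abs_le.mp habs
        have hm1 : min (p.2 j) (1 - p.2 j) ≤ p.2 j := min_le_left _ _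
        have hm2 : min (p.2 j) (1 - p.2 j) ≤ 1 - p.2 j := min_le_right _ _
        constructor <;> linarith [h2.1, h2.2]
    · intro ℓ hℓ
      dsimp only
      rw [FfunP_add]
      rcases hi ℓ hℓ with h | h
      · rw [h]
        have := hcons ℓ hℓ
        linarith
      · have hb := hε1 ℓ hℓ h
        rw [show Δ ℓ = ∑ j, coefP a n ℓ j * d j from rfl] at hb
        set q : ℝ := ∑ j, coefP a n ℓ j * d j with hq
        have h1 : c * (Dw - q) ≤ |c| * |q - Dw| := by
          rw [abs_sub_comm]
          calc c * (Dw - q) ≤ |c * (Dw - q)| := le_abs_self _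
            _ = |c| * |Dw - q| := abs_mul _ _
        have h2 : |c| * |q - Dw| ≤ ε * (|q - Dw| + 1) := by
          have := abs_nonneg (q - Dw)
          nlinarith
        linarith
  have h1 : p + ((ε * Dw, fun j => ε * d j) : ℝ × (Fin n → ℝ)) ∈ A := by
    have := hmemc ε (le_of_eq (abs_of_pos hεpos))
    exact this
  have h2 : p - ((ε * Dw, fun j => ε * d j) : ℝ × (Fin n → ℝ)) ∈ A := by
    have habs : |(-ε)| ≤ ε := le_of_eq (by rw [abs_neg, abs_of_pos hεpos])
    have := hmemc (-ε) habs
    have heq : (p.1 + (-ε) * Dw, fun j => p.2 j + (-ε) * d j)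
        = p - ((ε * Dw, fun j => ε * d j) : ℝ × (Fin n → ℝ)) := by
      apply Prod.ext
      · simp; ring
      · funext j
        show p.2 j + (-ε) * d j = p.2 j - ε * d j
        ring
    rwa [heq] at this
  have hdne : ((ε * Dw, fun j => ε * d j) : ℝ × (Fin n → ℝ)) ≠ 0 := by
    rcases hne with h | ⟨j, hj⟩
    · intro hcon
      exact mul_ne_zero (ne_of_gt hεpos) h (congrArg Prod.fst hcon)
    · intro hcon
      exact mul_ne_zero (ne_of_gt hεpos) hj (congrArg (fun q => q.2 j) hcon)
  exact mid_not_extreme hdne h1 h2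

/-- every extreme point of the polyhedron
`P = {(w,x) ∈ ℝ × [0,1]ⁿ : w ≤ f_ℓ(x) ∀ℓ ∈ [n]}` has `x ∈ {0,1}ⁿ`. The coordinate `x j`
(for `j : Fin n`) corresponds to facility `(j:ℕ)+1 ∈ [n]`. -/
theorem stmt_13 (n : ℕ) (u : ℕ → ℝ) (u0 : ℝ) (hu0 : 0 < u0)
    (hnn : ∀ j ∈ Finset.Icc 1 n, 0 ≤ u j) (hn1 : u (n + 1) = 0)
    (hmono : ∀ j ∈ Finset.Icc 1 (n+1), ∀ k ∈ Finset.Icc 1 (n+1), j ≤ k → u k ≤ u j)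
    (P : Set (ℝ × (Fin n → ℝ)))
    (hP : P = {p | (∀ j, 0 ≤ p.2 j ∧ p.2 j ≤ 1) ∧ ∀ ℓ ∈ Finset.Icc 1 n,
      p.1 ≤ u (ℓ+1) / (u (ℓ+1) + u0) +
        ∑ j : Fin n, (if (j : ℕ) + 1 ≤ ℓ then
          u ((j:ℕ)+1) / (u ((j:ℕ)+1) + u0) - u (ℓ+1) / (u (ℓ+1) + u0) else 0) * p.2 j})
    (p : ℝ × (Fin n → ℝ)) (hp : p ∈ Set.extremePoints ℝ P) :
    ∀ j, p.2 j = 0 ∨ p.2 j = 1 := by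
  classical
  intro j₀
  by_contra hj
  push_neg at hj
  have hPeq : P = {q : ℝ × (Fin n → ℝ) |
      (∀ j, 0 ≤ q.2 j ∧ q.2 j ≤ 1) ∧
      ∀ ℓ ∈ Finset.Icc 1 n, q.1 ≤ FfunP (fun m => u m / (u m + u0)) n ℓ q.2} := by
    rw [hP]; rfl
  rw [hPeq] at hp
  set a : ℕ → ℝ := fun m => u m / (u m + u0) with ha
  obtain ⟨hbox, hcons⟩ := hp.1
  have hfr0 : 0 < p.2 j₀ := lt_of_le_of_ne (hbox j₀).1 (Ne.symm hj.1)
  have hfr1 : p.2 j₀ < 1 := lt_of_le_of_ne (hbox j₀).2 hj.2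
  -- basic facts about u and a
  have hun : ∀ m ∈ Finset.Icc 1 (n+1), 0 ≤ u m := by
    intro m hm
    have := hmono m hm (n+1) (Finset.mem_Icc.mpr ⟨by omega, le_refl _⟩)
      (by rw [Finset.mem_Icc] at hm; omega)
    rw [hn1] at this
    exact this
  have hadiff : ∀ m, 1 ≤ m → m ≤ n → a (m+1) ≤ a m := by
    intro m h1 h2
    rw [ha]
    have hm1 : m ∈ Finset.Icc 1 (n+1) := Finset.mem_Icc.mpr ⟨h1, by omega⟩
    have hm2 : m+1 ∈ Finset.Icc 1 (n+1) := Finset.mem_Icc.mpr ⟨by omega, by omega⟩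
    have hu1 : 0 ≤ u m := hun m hm1
    have hu2 : 0 ≤ u (m+1) := hun (m+1) hm2
    have hle : u (m+1) ≤ u m := hmono m hm1 (m+1) hm2 (by omega)
    have hp1 : (0:ℝ) < u m + u0 := by linarith
    have hp2 : (0:ℝ) < u (m+1) + u0 := by linarith
    rw [div_le_div_iff₀ hp2 hp1]
    nlinarith
  -- tight set
  set T : Finset ℕ := (Finset.Icc 1 n).filter (fun ℓ => p.1 = FfunP a n ℓ p.2) with hTdef
  by_cases hT : T = ∅
  · refine absurd hp (not_extreme_of_direction n a p hbox hcons 1 (fun _ => 0) ?_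
      (fun j h => absurd rfl h) (Or.inl one_ne_zero))
    intro ℓ hℓ
    right
    refine lt_of_le_of_ne (hcons ℓ hℓ) ?_
    intro he
    exact (Finset.eq_empty_iff_forall_notMem.mp hT ℓ) (Finset.mem_filter.mpr ⟨hℓ, he⟩)
  · have hTne : T.Nonempty := Finset.nonempty_iff_ne_empty.mpr hT
    set ℓ₁ : ℕ := T.min' hTne with hl1def
    set ℓ₂ : ℕ := T.max' hTne with hl2def
    have hℓ₁T : ℓ₁ ∈ T := T.min'_mem hTne
    have hℓ₂T : ℓ₂ ∈ T := T.max'_mem hTne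
    have hℓ₁I : ℓ₁ ∈ Finset.Icc 1 n := (Finset.mem_filter.mp hℓ₁T).1
    have hℓ₂I : ℓ₂ ∈ Finset.Icc 1 n := (Finset.mem_filter.mp hℓ₂T).1
    have h1l : 1 ≤ ℓ₁ := (Finset.mem_Icc.mp hℓ₁I).1
    have hl2n : ℓ₂ ≤ n := (Finset.mem_Icc.mp hℓ₂I).2
    have htight1 : p.1 = FfunP a n ℓ₁ p.2 := (Finset.mem_filter.mp hℓ₁T).2
    have htight2 : p.1 = FfunP a n ℓ₂ p.2 := (Finset.mem_filter.mp hℓ₂T).2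
    have hxnn : ∀ j, 0 ≤ p.2 j := fun j => (hbox j).1
    -- key: zero products inside the tight interval
    have key : ∀ ℓ, ℓ₁ ≤ ℓ → ℓ + 1 ≤ ℓ₂ →
        (a (ℓ+1) - a (ℓ+2)) * (SfunP n p.2 (ℓ+1) - 1) = 0 := by
      intro ℓ hge hle
      have hadr : ∀ r, 1 ≤ r → r + 1 ≤ n → 0 ≤ a (r+1) - a (r+2) := by
        intro r h1 h2
        have := hadiff (r+1) (by omega) (by omega)
        rw [show r+1+1 = r+2 from rfl] at this
        linarith
      rcases lt_trichotomy ((a (ℓ+1) - a (ℓ+2)) * (SfunP n p.2 (ℓ+1) - 1)) 0 with hlt | h0 | hgt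
      · exfalso
        have hd : 0 ≤ a (ℓ+1) - a (ℓ+2) := hadr ℓ (by omega) (by omega)
        have hS : SfunP n p.2 (ℓ+1) < 1 := by nlinarith
        have htel := FfunP_Ico a n p.2 ℓ₁ (ℓ+1) (by omega)
        have hsum : ∑ r ∈ Finset.Ico ℓ₁ (ℓ+1),
            (a (r+1) - a (r+2)) * (SfunP n p.2 (r+1) - 1)
            ≤ (a (ℓ+1) - a (ℓ+2)) * (SfunP n p.2 (ℓ+1) - 1) := by
          rw [Finset.sum_Ico_succ_top hge]
          have : ∑ r ∈ Finset.Ico ℓ₁ ℓ,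
              (a (r+1) - a (r+2)) * (SfunP n p.2 (r+1) - 1) ≤ 0 := by
            apply Finset.sum_nonpos
            intro r hr
            rw [Finset.mem_Ico] at hr
            have hd' : 0 ≤ a (r+1) - a (r+2) := hadr r (by omega) (by omega)
            have hm : SfunP n p.2 (r+1) ≤ SfunP n p.2 (ℓ+1) :=
              SfunP_mono n p.2 hxnn (by omega)
            nlinarith
          linarith
        have hw := hcons (ℓ+1) (Finset.mem_Icc.mpr ⟨by omega, by omega⟩)
        linarith
      · exact h0
      · exfalso
        have hd : 0 ≤ a (ℓ+1) - a (ℓ+2) := hadr ℓ (by omega) (by omega)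
        have hS : 1 < SfunP n p.2 (ℓ+1) := by nlinarith
        have htel := FfunP_Ico a n p.2 ℓ ℓ₂ (by omega)
        have hsum : (a (ℓ+1) - a (ℓ+2)) * (SfunP n p.2 (ℓ+1) - 1)
            ≤ ∑ r ∈ Finset.Ico ℓ ℓ₂, (a (r+1) - a (r+2)) * (SfunP n p.2 (r+1) - 1) := by
          apply Finset.single_le_sum (f := fun r => (a (r+1) - a (r+2)) * (SfunP n p.2 (r+1) - 1))
          · intro r hr
            rw [Finset.mem_Ico] at hr
            have hd' : 0 ≤ a (r+1) - a (r+2) := hadr r (by omega) (by omega)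
            have hm : SfunP n p.2 (ℓ+1) ≤ SfunP n p.2 (r+1) :=
              SfunP_mono n p.2 hxnn (by omega)
            nlinarith
          · rw [Finset.mem_Ico]; omega
        have hw := hcons ℓ (Finset.mem_Icc.mpr ⟨by omega, by omega⟩)
        linarith
    set t : ℕ := (j₀ : ℕ) + 1 with ht
    set M : Finset ℕ := (Finset.Icc 1 n).filter
      (fun m => ℓ₁ < m ∧ m ≤ ℓ₂ ∧ SfunP n p.2 m = 1 ∧ a m ≠ a (m+1)) with hMdef
    -- the shared "constancy" argument
    have main : ∀ d : Fin n → ℝ, (∀ m ∈ M, SfunP n d m = 0) →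
        ∀ ℓ ∈ Finset.Icc 1 n,
          (∑ j, coefP a n ℓ j * d j) = (∑ j, coefP a n ℓ₁ j * d j) ∨
            p.1 < FfunP a n ℓ p.2 := by
      intro d hD ℓ hℓ
      by_cases hin : ℓ₁ ≤ ℓ ∧ ℓ ≤ ℓ₂
      · left
        have step : ∀ r, ℓ₁ ≤ r → r + 1 ≤ ℓ₂ →
            (∑ j, coefP a n (r+1) j * d j) = (∑ j, coefP a n r j * d j) := by
          intro r h1 h2
          have htel := FfunP_succ a n r d
          have hzero : (a (r+1) - a (r+2)) * SfunP n d (r+1) = 0 := by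
            by_cases he : a (r+1) = a (r+2)
            · rw [he]; ring
            · have hk := key r h1 h2
              have hS1 : SfunP n p.2 (r+1) = 1 := by
                rcases mul_eq_zero.mp hk with h | h
                · exact absurd (by linarith : a (r+1) = a (r+2)) he
                · linarith
              have hmem : (r+1) ∈ M := by
                rw [hMdef, Finset.mem_filter, Finset.mem_Icc]
                refine ⟨⟨by omega, by omega⟩, by omega, by omega, hS1, ?_⟩
                rw [show r+1+1 = r+2 from rfl]
                exact he
              rw [hD (r+1) hmem, mul_zero]
          rw [show FfunP a n (r+1) d = a (r+2) + ∑ j, coefP a n (r+1) j * d j from rfl,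
            show FfunP a n r d = a (r+1) + ∑ j, coefP a n r j * d j from rfl] at htel
          nlinarith [htel, hzero]
        have hconst : ∀ ℓ', ℓ₁ ≤ ℓ' → ℓ' ≤ ℓ₂ →
            (∑ j, coefP a n ℓ' j * d j) = (∑ j, coefP a n ℓ₁ j * d j) := by
          intro ℓ' h1'
          induction ℓ', h1' using Nat.le_induction with
          | base => intro _; rfl
          | succ r hr ih =>
            intro h2'
            rw [step r hr h2']
            exact ih (by omega)
        exact hconst ℓ hin.1 hin.2
      · right
        refine lt_of_le_of_ne (hcons ℓ hℓ) ?_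
        intro he
        have hmemT : ℓ ∈ T := Finset.mem_filter.mpr ⟨hℓ, he⟩
        exact hin ⟨T.min'_le ℓ hmemT, T.le_max' ℓ hmemT⟩
    by_cases hcase : ∀ m ∈ M, m < t
    · -- Case A: perturb x_{j₀} alone
      set d : Fin n → ℝ := fun j => if j = j₀ then (1:ℝ) else 0 with hd
      have hDzero : ∀ m ∈ M, SfunP n d m = 0 := by
        intro m hm
        have hmt : m < t := hcase m hm
        rw [hd, SfunP_single, if_neg (by omega)]
      refine absurd hp (not_extreme_of_direction n a p hbox hcons
        (∑ j, coefP a n ℓ₁ j * d j) d (main d hDzero) ?_ (Or.inr ⟨j₀, by rw [hd]; simp⟩))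
      intro j hdj
      have : j = j₀ := by
        by_contra hne
        rw [hd] at hdj
        simp [hne] at hdj
      rw [this]
      exact ⟨hfr0, hfr1⟩
    · -- Case B: there is m ∈ M with t ≤ m
      push_neg at hcase
      obtain ⟨mw, hmwM, hmwt⟩ := hcase
      have hMne : M.Nonempty := ⟨mw, hmwM⟩
      set m₀ : ℕ := M.min' hMne with hm0def
      have hm₀M : m₀ ∈ M := M.min'_mem hMne
      have hm₀S : SfunP n p.2 m₀ = 1 := (Finset.mem_filter.mp hm₀M).2.2.2.1
      have hmwS : SfunP n p.2 mw = 1 := (Finset.mem_filter.mp hmwM).2.2.2.1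
      have hm₀t : t ≤ m₀ := by
        by_contra hlt
        push_neg at hlt
        -- m₀ < t ≤ mw : then x_{j₀} = 0, contradiction
        have hm0mw : m₀ ≤ mw := M.min'_le mw hmwM
        have hsub : ∑ j : Fin n, ((if (j:ℕ)+1 ≤ mw then p.2 j else 0)
            - (if (j:ℕ)+1 ≤ m₀ then p.2 j else 0)) = 0 := by
          rw [Finset.sum_sub_distrib]
          have e1 : ∑ j : Fin n, (if (j:ℕ)+1 ≤ mw then p.2 j else 0) = SfunP n p.2 mw := rfl
          have e2 : ∑ j : Fin n, (if (j:ℕ)+1 ≤ m₀ then p.2 j else 0) = SfunP n p.2 m₀ := rfl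
          rw [e1, e2, hm₀S, hmwS]
          ring
        have hnn' : ∀ j ∈ (Finset.univ : Finset (Fin n)), 0 ≤ (if (j:ℕ)+1 ≤ mw then p.2 j else 0)
            - (if (j:ℕ)+1 ≤ m₀ then p.2 j else 0) := by
          intro j _
          by_cases h1 : (j:ℕ)+1 ≤ m₀
          · rw [if_pos h1, if_pos (by omega)]; linarith
          · rw [if_neg h1]
            by_cases h2 : (j:ℕ)+1 ≤ mw
            · rw [if_pos h2]; linarith [hxnn j]
            · rw [if_neg h2]; linarith
        have hj0z := (Finset.sum_eq_zero_iff_of_nonneg hnn').mp hsub j₀ (Finset.mem_univ j₀)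
        rw [if_pos (show (j₀:ℕ)+1 ≤ mw by omega), if_neg (show ¬((j₀:ℕ)+1 ≤ m₀) by omega)]
          at hj0z
        linarith
      -- find a second fractional coordinate j' with j'+1 ≤ m₀
      have hj' : ∃ j' : Fin n, j' ≠ j₀ ∧ (j':ℕ)+1 ≤ m₀ ∧ 0 < p.2 j' ∧ p.2 j' < 1 := by
        set s : Finset (Fin n) := (Finset.univ.filter (fun j : Fin n => (j:ℕ)+1 ≤ m₀)) with hs
        have hj₀s : j₀ ∈ s := by rw [hs]; simp; omega
        have hsplit : p.2 j₀ + ∑ j ∈ s.erase j₀, p.2 j = 1 := by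
          rw [Finset.add_sum_erase s p.2 hj₀s]
          rw [← hm₀S]
          rw [show SfunP n p.2 m₀ = ∑ j : Fin n, if (j:ℕ)+1 ≤ m₀ then p.2 j else 0 from rfl]
          rw [hs, Finset.sum_filter]
        by_contra hno
        push_neg at hno
        have hall : ∀ j ∈ s.erase j₀, p.2 j = 0 ∨ p.2 j = 1 := by
          intro j hjs
          rw [Finset.mem_erase] at hjs
          rw [hs, Finset.mem_filter] at hjs
          by_contra hb
          push_neg at hb
          have h0 : 0 < p.2 j := lt_of_le_of_ne (hxnn j) (Ne.symm hb.1)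
          have h1 : p.2 j < 1 := lt_of_le_of_ne (hbox j).2 hb.2
          have := hno j hjs.1 hjs.2.2 h0
          linarith
        have hcast1 : ∑ j ∈ s.erase j₀, p.2 j
            = ∑ j ∈ s.erase j₀, (if p.2 j = 1 then (1:ℝ) else 0) := by
          apply Finset.sum_congr rfl
          intro j hjs
          rcases hall j hjs with h | h <;> simp [h]
        rw [hcast1, Finset.sum_boole] at hsplit
        have hgen : ∀ k : ℕ, p.2 j₀ + (k:ℝ) = 1 → False := by
          intro k hk
          rcases Nat.eq_zero_or_pos k with h | h
          · rw [h] at hk; simp at hk; linarith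
          · have : (1:ℝ) ≤ (k:ℝ) := by exact_mod_cast h
            linarith
        exact hgen _ hsplit
      obtain ⟨j', hne', hle', hf0', hf1'⟩ := hj'
      set d : Fin n → ℝ :=
        fun j => (if j = j₀ then (1:ℝ) else 0) - (if j = j' then (1:ℝ) else 0) with hd
      have hDzero : ∀ m ∈ M, SfunP n d m = 0 := by
        intro m hm
        have hm0m : m₀ ≤ m := M.min'_le m hm
        have hsplitS : SfunP n d m
            = SfunP n (fun j => if j = j₀ then (1:ℝ) else 0) m
              - SfunP n (fun j => if j = j' then (1:ℝ) else 0) m := by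
          unfold SfunP
          rw [← Finset.sum_sub_distrib]
          apply Finset.sum_congr rfl
          intro j _
          rw [hd]
          split_ifs <;> ring
        rw [hsplitS, SfunP_single, SfunP_single,
          if_pos (show (j₀:ℕ)+1 ≤ m by omega), if_pos (show (j':ℕ)+1 ≤ m by omega)]
        ring
      refine absurd hp (not_extreme_of_direction n a p hbox hcons
        (∑ j, coefP a n ℓ₁ j * d j) d (main d hDzero) ?_
        (Or.inr ⟨j₀, by rw [hd]; simp [Ne.symm hne']⟩))
      intro j hdj
      by_cases h1 : j = j₀
      · rw [h1]; exact ⟨hfr0, hfr1⟩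
      · by_cases h2 : j = j'
        · rw [h2]; exact ⟨hf0', hf1'⟩
        · exfalso
          rw [hd] at hdj
          simp [h1, h2] at hdj
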